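/- arXiv:2504.13036 — 7 statements merged into one kernel-verified Lean document; each statement's English description precedes it below -/
import Mathlib

section
/- Energy dissipation for the generalized energy-based system: Suppose z₁ : [t₀,t_f] → ℝ^{n₁}, z₂ : [t₀,t_f] → ℝ^{n₂}, z₃ : [t₀,t_f] → ℝ^{n₃} are continuously differentiable, H : ℝ^{n₁} × ℝ^{n₂} → ℝ is C¹, e : ℝ^{n₁} × ℝ^{n₂} → ℝ^{n₂} is continuous with Eᵀ e(z₁,z₂) = ∇_{z₂} H(z₁,z₂) for all (z₁,z₂), and along the trajectory the equation [∇_{z₁}H; E ż₂; 0] = (J - R)[ż₁; e(z₁,z₂); z₃] + B u holds with J skew-symmetric, R symmetric positive semi-definite, and y = Bᵀ [ż₁; e(z₁,z₂); z₃]. Then d/dt H(z₁(t), z₂(t)) ≤ ⟨y(t), u(t)⟩ for all t; in particular if u ≡ 0 then H(z₁(t),z₂(t)) is non-increasing. -/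
open Matrix

private lemma dot_sum_elim {α β : Type*} [Fintype α] [Fintype β]
    (a c : α → ℝ) (b d : β → ℝ) :
    Sum.elim a b ⬝ᵥ Sum.elim c d = a ⬝ᵥ c + b ⬝ᵥ d := by
  simp [dotProduct, Fintype.sum_sum_type]

theorem stmt_1 {n₁ n₂ n₃ m : ℕ}
    (t₀ tf : ℝ)
    (z₁ : ℝ → Fin n₁ → ℝ) (z₂ : ℝ → Fin n₂ → ℝ) (z₃ : ℝ → Fin n₃ → ℝ)
    (z₁' : ℝ → Fin n₁ → ℝ) (z₂' : ℝ → Fin n₂ → ℝ)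
    (H : (Fin n₁ → ℝ) → (Fin n₂ → ℝ) → ℝ)
    (g₁ : (Fin n₁ → ℝ) → (Fin n₂ → ℝ) → Fin n₁ → ℝ)
    (g₂ : (Fin n₁ → ℝ) → (Fin n₂ → ℝ) → Fin n₂ → ℝ)
    (e : (Fin n₁ → ℝ) → (Fin n₂ → ℝ) → Fin n₂ → ℝ)
    (E : Matrix (Fin n₂) (Fin n₂) ℝ)
    (J R : Matrix (Fin n₁ ⊕ (Fin n₂ ⊕ Fin n₃)) (Fin n₁ ⊕ (Fin n₂ ⊕ Fin n₃)) ℝ)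
    (B : Matrix (Fin n₁ ⊕ (Fin n₂ ⊕ Fin n₃)) (Fin m) ℝ)
    (u y : ℝ → Fin m → ℝ)
    (hJ : Jᵀ = -J) (hR : R.PosSemidef)
    (hz₁ : ∀ t ∈ Set.Icc t₀ tf, ∀ i, HasDerivAt (fun s => z₁ s i) (z₁' t i) t)
    (hz₂ : ∀ t ∈ Set.Icc t₀ tf, ∀ i, HasDerivAt (fun s => z₂ s i) (z₂' t i) t)
    -- chain rule for the C¹ Hamiltonian along the C¹ trajectory, with
    -- gradients g₁ = ∇_{z₁}H and g₂ = ∇_{z₂}H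
    (hH : ∀ t ∈ Set.Icc t₀ tf,
      HasDerivAt (fun s => H (z₁ s) (z₂ s))
        (g₁ (z₁ t) (z₂ t) ⬝ᵥ z₁' t + g₂ (z₁ t) (z₂ t) ⬝ᵥ z₂' t) t)
    -- the effort condition  Eᵀ e(z₁,z₂) = ∇_{z₂}H(z₁,z₂)
    (hE : ∀ x₁ x₂, Eᵀ *ᵥ e x₁ x₂ = g₂ x₁ x₂)
    -- the generalized energy-based system equation
    (heq : ∀ t ∈ Set.Icc t₀ tf,
      Sum.elim (g₁ (z₁ t) (z₂ t)) (Sum.elim (E *ᵥ z₂' t) 0)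
        = (J - R) *ᵥ Sum.elim (z₁' t) (Sum.elim (e (z₁ t) (z₂ t)) (z₃ t))
          + B *ᵥ u t)
    -- the output equation
    (hy : ∀ t ∈ Set.Icc t₀ tf,
      y t = Bᵀ *ᵥ Sum.elim (z₁' t) (Sum.elim (e (z₁ t) (z₂ t)) (z₃ t))) :
    (∀ t ∈ Set.Icc t₀ tf,
      HasDerivAt (fun s => H (z₁ s) (z₂ s))
        (g₁ (z₁ t) (z₂ t) ⬝ᵥ z₁' t + g₂ (z₁ t) (z₂ t) ⬝ᵥ z₂' t) t ∧
      g₁ (z₁ t) (z₂ t) ⬝ᵥ z₁' t + g₂ (z₁ t) (z₂ t) ⬝ᵥ z₂' t ≤ y t ⬝ᵥ u t) ∧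
    ((∀ t ∈ Set.Icc t₀ tf, u t = 0) →
      ∀ s ∈ Set.Icc t₀ tf, ∀ t ∈ Set.Icc t₀ tf, s ≤ t →
        H (z₁ t) (z₂ t) ≤ H (z₁ s) (z₂ s)) := by
  have key : ∀ t ∈ Set.Icc t₀ tf,
      g₁ (z₁ t) (z₂ t) ⬝ᵥ z₁' t + g₂ (z₁ t) (z₂ t) ⬝ᵥ z₂' t ≤ y t ⬝ᵥ u t := by
    intro t ht
    set v : Fin n₁ ⊕ (Fin n₂ ⊕ Fin n₃) → ℝ :=
      Sum.elim (z₁' t) (Sum.elim (e (z₁ t) (z₂ t)) (z₃ t)) with hv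
    have h1 : g₁ (z₁ t) (z₂ t) ⬝ᵥ z₁' t + g₂ (z₁ t) (z₂ t) ⬝ᵥ z₂' t
        = Sum.elim (g₁ (z₁ t) (z₂ t))
            (Sum.elim (E *ᵥ z₂' t) (0 : Fin n₃ → ℝ)) ⬝ᵥ v := by
      rw [hv, dot_sum_elim, dot_sum_elim]
      have : (E *ᵥ z₂' t) ⬝ᵥ e (z₁ t) (z₂ t) = g₂ (z₁ t) (z₂ t) ⬝ᵥ z₂' t := by
        rw [dotProduct_comm, dotProduct_mulVec, ← mulVec_transpose,
          hE (z₁ t) (z₂ t), dotProduct_comm]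
      rw [this, zero_dotProduct]
      ring
    have hJv : v ⬝ᵥ (J *ᵥ v) = 0 := by
      have h : v ⬝ᵥ (J *ᵥ v) = -(v ⬝ᵥ (J *ᵥ v)) := by
        conv_lhs => rw [dotProduct_mulVec, ← mulVec_transpose, hJ, neg_mulVec,
          dotProduct_comm, dotProduct_neg]
      linarith
    have hRv : 0 ≤ v ⬝ᵥ (R *ᵥ v) := by
      have := hR.dotProduct_mulVec_nonneg v
      simpa using this
    have hyu : y t ⬝ᵥ u t = v ⬝ᵥ (B *ᵥ u t) := by
      rw [hy t ht, dotProduct_mulVec, mulVec_transpose]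
    rw [h1, heq t ht, ← hv, dotProduct_comm, dotProduct_add, sub_mulVec, dotProduct_sub, hJv, hyu]
    linarith
  refine ⟨fun t ht => ⟨hH t ht, key t ht⟩, fun hu => ?_⟩
  intro s hs t ht hst
  have hanti : AntitoneOn (fun s => H (z₁ s) (z₂ s)) (Set.Icc t₀ tf) := by
    apply antitoneOn_of_deriv_nonpos (convex_Icc t₀ tf)
    · exact fun x hx => (hH x hx).continuousAt.continuousWithinAt
    · intro x hx
      rw [interior_Icc] at hx
      exact ((hH x (Set.mem_Icc_of_Ioo hx)).differentiableAt).differentiableWithinAt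
    · intro x hx
      rw [interior_Icc] at hx
      have hx' := Set.mem_Icc_of_Ioo hx
      rw [(hH x hx').deriv]
      have := key x hx'
      rw [hu x hx', dotProduct_zero] at this
      exact this
  exact hanti hs ht hst
end

section
/- Structure preservation under interconnection: given two energy-based systems of the form [∇_{z₁}H⁽ⁱ⁾; E⁽ⁱ⁾ż₂⁽ⁱ⁾; 0] = (J⁽ⁱ⁾ - R⁽ⁱ⁾)[ż₁⁽ⁱ⁾; e⁽ⁱ⁾; z₃⁽ⁱ⁾] + B⁽ⁱ⁾u⁽ⁱ⁾ with outputs y⁽ⁱ⁾ = B⁽ⁱ⁾ᵀ[ż₁⁽ⁱ⁾; e⁽ⁱ⁾; z₃⁽ⁱ⁾], coupled by (u⁽¹⁾; u⁽²⁾) = (F_skew - F_sym)(y⁽¹⁾; y⁽²⁾) + (ũ⁽¹⁾; ũ⁽²⁾) with F_skew skew-symmetric and F_sym symmetric positive semi-definite, the coupled state (z⁽¹⁾, z⁽²⁾) satisfies a system of the same form with Hamiltonian H = H⁽¹⁾ + H⁽²⁾, structure matrix 𝒥 = J + B F_skew Bᵀ (skew-symmetric) and dissipation matrix ℛ = R +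 B F_sym Bᵀ (symmetric positive semi-definite), where J, R, B are block-assembled from the subsystem matrices, and input ũ. -/
open Matrix

/-- The permutation sending the interleaved grouping
`(a₁ ⊕ a₂) ⊕ (b₁ ⊕ b₂) ⊕ (c₁ ⊕ c₂)` of the coupled state
`((z₁¹,z₁²),(z₂¹,z₂²),(z₃¹,z₃²))` to the stacked grouping
`(a₁ ⊕ b₁ ⊕ c₁) ⊕ (a₂ ⊕ b₂ ⊕ c₂)` of the two subsystem states. -/
def shuffle {a1 a2 b1 b2 c1 c2 : Type*} :
    (a1 ⊕ a2) ⊕ ((b1 ⊕ b2) ⊕ (c1 ⊕ c2)) → (a1 ⊕ (b1 ⊕ c1)) ⊕ (a2 ⊕ (b2 ⊕ c2))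
  | .inl (.inl x) => .inl (.inl x)
  | .inl (.inr x) => .inr (.inl x)
  | .inr (.inl (.inl x)) => .inl (.inr (.inl x))
  | .inr (.inl (.inr x)) => .inr (.inr (.inl x))
  | .inr (.inr (.inl x)) => .inl (.inr (.inr x))
  | .inr (.inr (.inr x)) => .inr (.inr (.inr x))

def shuffleEquiv {a1 a2 b1 b2 c1 c2 : Type*} :
    ((a1 ⊕ a2) ⊕ ((b1 ⊕ b2) ⊕ (c1 ⊕ c2))) ≃ ((a1 ⊕ (b1 ⊕ c1)) ⊕ (a2 ⊕ (b2 ⊕ c2))) where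
  toFun := shuffle
  invFun
    | .inl (.inl x) => .inl (.inl x)
    | .inl (.inr (.inl x)) => .inr (.inl (.inl x))
    | .inl (.inr (.inr x)) => .inr (.inr (.inl x))
    | .inr (.inl x) => .inl (.inr x)
    | .inr (.inr (.inl x)) => .inr (.inl (.inr x))
    | .inr (.inr (.inr x)) => .inr (.inr (.inr x))
  left_inv := by rintro ((x|x)|((x|x)|(x|x))) <;> rfl
  right_inv := by rintro ((x|(x|x))|(x|(x|x))) <;> rfl

lemma posSemidef_fromBlocks_diag {n m : Type*} [Fintype n] [Fintype m]
    {A : Matrix n n ℝ} {D : Matrix m m ℝ} (hA : A.PosSemidef) (hD : D.PosSemidef) :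
    (Matrix.fromBlocks A 0 0 D).PosSemidef := by
  rw [Matrix.posSemidef_iff_dotProduct_mulVec]
  constructor
  · have hAt : Aᵀ = A := by simpa using hA.1.eq
    have hDt : Dᵀ = D := by simpa using hD.1.eq
    show _ᴴ = _
    simp [Matrix.conjTranspose_eq_transpose_of_trivial,
      Matrix.fromBlocks_transpose, hAt, hDt]
  · intro x
    have hx : x = Sum.elim (x ∘ Sum.inl) (x ∘ Sum.inr) := funext fun i => by cases i <;> rfl
    rw [hx, Matrix.fromBlocks_mulVec]
    simp only [Matrix.zero_mulVec, add_zero, zero_add]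
    have hs : star (Sum.elim (x ∘ Sum.inl) (x ∘ Sum.inr))
        = Sum.elim (star (x ∘ Sum.inl)) (star (x ∘ Sum.inr)) :=
      funext fun i => by cases i <;> rfl
    rw [hs, sumElim_dotProduct_sumElim]
    exact add_nonneg (hA.dotProduct_mulVec_nonneg _) (hD.dotProduct_mulVec_nonneg _)

lemma submatrix_id_mulVec {l m n : Type*} [Fintype n] (M : Matrix m n ℝ) (f : l → m)
    (v : n → ℝ) : (M.submatrix f id) *ᵥ v = (M *ᵥ v) ∘ f := rfl

lemma submatrix_shuffle_mulVec {a1 a2 b1 b2 c1 c2 : Type*}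
    [Fintype a1] [Fintype a2] [Fintype b1] [Fintype b2] [Fintype c1] [Fintype c2]
    (M : Matrix ((a1 ⊕ (b1 ⊕ c1)) ⊕ (a2 ⊕ (b2 ⊕ c2))) ((a1 ⊕ (b1 ⊕ c1)) ⊕ (a2 ⊕ (b2 ⊕ c2))) ℝ)
    (v : (a1 ⊕ (b1 ⊕ c1)) ⊕ (a2 ⊕ (b2 ⊕ c2)) → ℝ) :
    (M.submatrix shuffle shuffle) *ᵥ (v ∘ shuffle) = (M *ᵥ v) ∘ shuffle := by
  have h : (shuffle : ((a1 ⊕ a2) ⊕ ((b1 ⊕ b2) ⊕ (c1 ⊕ c2))) → _)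
      = ⇑(shuffleEquiv (a1 := a1) (a2 := a2) (b1 := b1) (b2 := b2) (c1 := c1) (c2 := c2)) := rfl
  rw [h, Matrix.submatrix_mulVec_equiv]
  have h2 : (v ∘ ⇑(shuffleEquiv (a1 := a1) (a2 := a2) (b1 := b1) (b2 := b2) (c1 := c1) (c2 := c2)))
      ∘ ⇑(shuffleEquiv (a1 := a1) (a2 := a2) (b1 := b1) (b2 := b2) (c1 := c1) (c2 := c2)).symm = v :=
    funext fun i => congrArg v (Equiv.apply_symm_apply _ i)
  rw [h2]

lemma submatrix_id_shuffle_mulVec {a1 a2 b1 b2 c1 c2 l : Type*}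
    [Fintype a1] [Fintype a2] [Fintype b1] [Fintype b2] [Fintype c1] [Fintype c2]
    (M : Matrix l ((a1 ⊕ (b1 ⊕ c1)) ⊕ (a2 ⊕ (b2 ⊕ c2))) ℝ)
    (v : (a1 ⊕ (b1 ⊕ c1)) ⊕ (a2 ⊕ (b2 ⊕ c2)) → ℝ) :
    (M.submatrix id shuffle) *ᵥ (v ∘ shuffle) = M *ᵥ v := by
  have h : (shuffle : ((a1 ⊕ a2) ⊕ ((b1 ⊕ b2) ⊕ (c1 ⊕ c2))) → _)
      = ⇑(shuffleEquiv (a1 := a1) (a2 := a2) (b1 := b1) (b2 := b2) (c1 := c1) (c2 := c2)) := rfl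
  rw [h, Matrix.submatrix_mulVec_equiv]
  have h2 : (v ∘ ⇑(shuffleEquiv (a1 := a1) (a2 := a2) (b1 := b1) (b2 := b2) (c1 := c1) (c2 := c2)))
      ∘ ⇑(shuffleEquiv (a1 := a1) (a2 := a2) (b1 := b1) (b2 := b2) (c1 := c1) (c2 := c2)).symm = v :=
    funext fun i => congrArg v (Equiv.apply_symm_apply _ i)
  rw [h2]
  rfl


theorem stmt_4 {a1 b1 c1 a2 b2 c2 m1 m2 : ℕ}
    (t₀ tf : ℝ)
    -- subsystem 1
    (w₁ : ℝ → Fin a1 → ℝ) (w₂ : ℝ → Fin b1 → ℝ) (w₃ : ℝ → Fin c1 → ℝ)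
    (w₁' : ℝ → Fin a1 → ℝ) (w₂' : ℝ → Fin b1 → ℝ)
    (H1 : (Fin a1 → ℝ) → (Fin b1 → ℝ) → ℝ)
    (g11 : (Fin a1 → ℝ) → (Fin b1 → ℝ) → Fin a1 → ℝ)
    (g12 : (Fin a1 → ℝ) → (Fin b1 → ℝ) → Fin b1 → ℝ)
    (e1 : (Fin a1 → ℝ) → (Fin b1 → ℝ) → Fin b1 → ℝ)
    (E1 : Matrix (Fin b1) (Fin b1) ℝ)
    (J1 R1 : Matrix (Fin a1 ⊕ (Fin b1 ⊕ Fin c1)) (Fin a1 ⊕ (Fin b1 ⊕ Fin c1)) ℝ)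
    (B1 : Matrix (Fin a1 ⊕ (Fin b1 ⊕ Fin c1)) (Fin m1) ℝ)
    (u1 y1 : ℝ → Fin m1 → ℝ)
    (hJ1 : J1ᵀ = -J1) (hR1 : R1.PosSemidef)
    (hE1 : ∀ x₁ x₂, E1ᵀ *ᵥ e1 x₁ x₂ = g12 x₁ x₂)
    (heq1 : ∀ t ∈ Set.Icc t₀ tf,
      Sum.elim (g11 (w₁ t) (w₂ t)) (Sum.elim (E1 *ᵥ w₂' t) 0)
        = (J1 - R1) *ᵥ Sum.elim (w₁' t) (Sum.elim (e1 (w₁ t) (w₂ t)) (w₃ t))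
          + B1 *ᵥ u1 t)
    (hy1 : ∀ t ∈ Set.Icc t₀ tf,
      y1 t = B1ᵀ *ᵥ Sum.elim (w₁' t) (Sum.elim (e1 (w₁ t) (w₂ t)) (w₃ t)))
    -- subsystem 2
    (x₁ : ℝ → Fin a2 → ℝ) (x₂ : ℝ → Fin b2 → ℝ) (x₃ : ℝ → Fin c2 → ℝ)
    (x₁' : ℝ → Fin a2 → ℝ) (x₂' : ℝ → Fin b2 → ℝ)
    (H2 : (Fin a2 → ℝ) → (Fin b2 → ℝ) → ℝ)
    (g21 : (Fin a2 → ℝ) → (Fin b2 → ℝ) → Fin a2 → ℝ)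
    (g22 : (Fin a2 → ℝ) → (Fin b2 → ℝ) → Fin b2 → ℝ)
    (e2 : (Fin a2 → ℝ) → (Fin b2 → ℝ) → Fin b2 → ℝ)
    (E2 : Matrix (Fin b2) (Fin b2) ℝ)
    (J2 R2 : Matrix (Fin a2 ⊕ (Fin b2 ⊕ Fin c2)) (Fin a2 ⊕ (Fin b2 ⊕ Fin c2)) ℝ)
    (B2 : Matrix (Fin a2 ⊕ (Fin b2 ⊕ Fin c2)) (Fin m2) ℝ)
    (u2 y2 : ℝ → Fin m2 → ℝ)
    (hJ2 : J2ᵀ = -J2) (hR2 : R2.PosSemidef)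
    (hE2 : ∀ x₁ x₂, E2ᵀ *ᵥ e2 x₁ x₂ = g22 x₁ x₂)
    (heq2 : ∀ t ∈ Set.Icc t₀ tf,
      Sum.elim (g21 (x₁ t) (x₂ t)) (Sum.elim (E2 *ᵥ x₂' t) 0)
        = (J2 - R2) *ᵥ Sum.elim (x₁' t) (Sum.elim (e2 (x₁ t) (x₂ t)) (x₃ t))
          + B2 *ᵥ u2 t)
    (hy2 : ∀ t ∈ Set.Icc t₀ tf,
      y2 t = B2ᵀ *ᵥ Sum.elim (x₁' t) (Sum.elim (e2 (x₁ t) (x₂ t)) (x₃ t)))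
    -- interconnection
    (Fskew Fsym : Matrix (Fin m1 ⊕ Fin m2) (Fin m1 ⊕ Fin m2) ℝ)
    (hFskew : Fskewᵀ = -Fskew) (hFsym : Fsym.PosSemidef)
    (utilde1 : ℝ → Fin m1 → ℝ) (utilde2 : ℝ → Fin m2 → ℝ)
    (hcoupling : ∀ t ∈ Set.Icc t₀ tf,
      Sum.elim (u1 t) (u2 t)
        = (Fskew - Fsym) *ᵥ Sum.elim (y1 t) (y2 t) + Sum.elim (utilde1 t) (utilde2 t)) :
    -- block-assembled matrices of the coupled system
    ∀ (J R : Matrix ((Fin a1 ⊕ Fin a2) ⊕ ((Fin b1 ⊕ Fin b2) ⊕ (Fin c1 ⊕ Fin c2)))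
        ((Fin a1 ⊕ Fin a2) ⊕ ((Fin b1 ⊕ Fin b2) ⊕ (Fin c1 ⊕ Fin c2))) ℝ)
      (B : Matrix ((Fin a1 ⊕ Fin a2) ⊕ ((Fin b1 ⊕ Fin b2) ⊕ (Fin c1 ⊕ Fin c2)))
        (Fin m1 ⊕ Fin m2) ℝ)
      (E : Matrix (Fin b1 ⊕ Fin b2) (Fin b1 ⊕ Fin b2) ℝ),
    J = (Matrix.fromBlocks J1 0 0 J2).submatrix shuffle shuffle →
    R = (Matrix.fromBlocks R1 0 0 R2).submatrix shuffle shuffle →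
    B = (Matrix.fromBlocks B1 0 0 B2).submatrix shuffle id →
    E = Matrix.fromBlocks E1 0 0 E2 →
    -- the coupled structure matrix is skew-symmetric
    (J + B * Fskew * Bᵀ)ᵀ = -(J + B * Fskew * Bᵀ) ∧
    -- the coupled dissipation matrix is symmetric positive semi-definite
    (R + B * Fsym * Bᵀ).PosSemidef ∧
    -- the coupled effort condition, for H = H¹ + H²
    (∀ (p₁ : Fin a1 → ℝ) (p₂ : Fin b1 → ℝ) (q₁ : Fin a2 → ℝ) (q₂ : Fin b2 → ℝ),
      Eᵀ *ᵥ Sum.elim (e1 p₁ p₂) (e2 q₁ q₂) = Sum.elim (g12 p₁ p₂) (g22 q₁ q₂)) ∧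
    -- the coupled system equation with input utilde
    (∀ t ∈ Set.Icc t₀ tf,
      (Sum.elim (Sum.elim (g11 (w₁ t) (w₂ t)) (g21 (x₁ t) (x₂ t)))
          (Sum.elim (E *ᵥ Sum.elim (w₂' t) (x₂' t)) 0)
        = ((J + B * Fskew * Bᵀ) - (R + B * Fsym * Bᵀ)) *ᵥ
            Sum.elim (Sum.elim (w₁' t) (x₁' t))
              (Sum.elim (Sum.elim (e1 (w₁ t) (w₂ t)) (e2 (x₁ t) (x₂ t)))
                (Sum.elim (w₃ t) (x₃ t)))
          + B *ᵥ Sum.elim (utilde1 t) (utilde2 t)) ∧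
      -- the coupled output equation
      Sum.elim (y1 t) (y2 t)
        = Bᵀ *ᵥ Sum.elim (Sum.elim (w₁' t) (x₁' t))
            (Sum.elim (Sum.elim (e1 (w₁ t) (w₂ t)) (e2 (x₁ t) (x₂ t)))
              (Sum.elim (w₃ t) (x₃ t)))) := by
  intro J R B E hJ hR hB hE
  subst hJ hR hB hE
  refine ⟨?_, ?_, ?_, ?_⟩
  · -- skew symmetry
    have hJt : (Matrix.fromBlocks J1 0 0 J2)ᵀ = -(Matrix.fromBlocks J1 0 0 J2) := by
      rw [Matrix.fromBlocks_transpose, hJ1, hJ2]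
      ext (i|i) (j|j) <;> simp
    have h1 : ((Matrix.fromBlocks J1 0 0 J2).submatrix shuffle shuffle)ᵀ
        = -((Matrix.fromBlocks J1 0 0 J2).submatrix shuffle shuffle) := by
      rw [Matrix.transpose_submatrix, hJt]
      rfl
    have h2 : ∀ (Bm : Matrix ((Fin a1 ⊕ Fin a2) ⊕ ((Fin b1 ⊕ Fin b2) ⊕ (Fin c1 ⊕ Fin c2)))
          (Fin m1 ⊕ Fin m2) ℝ), (Bm * Fskew * Bmᵀ)ᵀ = -(Bm * Fskew * Bmᵀ) := by
      intro Bm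
      rw [Matrix.transpose_mul, Matrix.transpose_mul, Matrix.transpose_transpose, hFskew]
      simp [Matrix.mul_assoc, Matrix.neg_mul, Matrix.mul_neg]
    rw [Matrix.transpose_add, h1, h2, neg_add]
  · -- positive semidefiniteness
    refine Matrix.PosSemidef.add ((posSemidef_fromBlocks_diag hR1 hR2).submatrix shuffle) ?_
    simpa using hFsym.mul_mul_conjTranspose_same ((Matrix.fromBlocks B1 0 0 B2).submatrix shuffle id)
  · -- effort condition
    intro p₁ p₂ q₁ q₂
    rw [Matrix.fromBlocks_transpose]
    simp [Matrix.fromBlocks_mulVec, hE1, hE2]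
  · intro t ht
    set v1 : Fin a1 ⊕ (Fin b1 ⊕ Fin c1) → ℝ :=
      Sum.elim (w₁' t) (Sum.elim (e1 (w₁ t) (w₂ t)) (w₃ t)) with hv1
    set v2 : Fin a2 ⊕ (Fin b2 ⊕ Fin c2) → ℝ :=
      Sum.elim (x₁' t) (Sum.elim (e2 (x₁ t) (x₂ t)) (x₃ t)) with hv2
    have hV : Sum.elim (Sum.elim (w₁' t) (x₁' t))
        (Sum.elim (Sum.elim (e1 (w₁ t) (w₂ t)) (e2 (x₁ t) (x₂ t))) (Sum.elim (w₃ t) (x₃ t)))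
        = Sum.elim v1 v2 ∘ shuffle := by
      funext i
      rcases i with (i|i)|((i|i)|(i|i)) <;> rfl
    have hBtV : ((Matrix.fromBlocks B1 0 0 B2).submatrix shuffle id)ᵀ *ᵥ (Sum.elim v1 v2 ∘ shuffle)
        = Sum.elim (y1 t) (y2 t) := by
      rw [Matrix.transpose_submatrix, submatrix_id_shuffle_mulVec,
        Matrix.fromBlocks_transpose, Matrix.fromBlocks_mulVec]
      simp only [Matrix.transpose_zero, Matrix.zero_mulVec, add_zero, zero_add,
        Sum.elim_comp_inl, Sum.elim_comp_inr]
      rw [← hy1 t ht, ← hy2 t ht]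
    refine ⟨?_, ?_⟩
    · -- coupled system equation
      rw [hV]
      have hsplit : (((Matrix.fromBlocks J1 0 0 J2).submatrix shuffle shuffle)
            + (Matrix.fromBlocks B1 0 0 B2).submatrix shuffle id * Fskew
              * ((Matrix.fromBlocks B1 0 0 B2).submatrix shuffle id)ᵀ)
          - (((Matrix.fromBlocks R1 0 0 R2).submatrix shuffle shuffle)
            + (Matrix.fromBlocks B1 0 0 B2).submatrix shuffle id * Fsym
              * ((Matrix.fromBlocks B1 0 0 B2).submatrix shuffle id)ᵀ)
          = ((Matrix.fromBlocks J1 0 0 J2 - Matrix.fromBlocks R1 0 0 R2).submatrix shuffle shuffle)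
            + (Matrix.fromBlocks B1 0 0 B2).submatrix shuffle id * (Fskew - Fsym)
              * ((Matrix.fromBlocks B1 0 0 B2).submatrix shuffle id)ᵀ := by
        rw [Matrix.mul_sub, Matrix.sub_mul]
        rw [show ((Matrix.fromBlocks J1 0 0 J2 - Matrix.fromBlocks R1 0 0 R2).submatrix
            shuffle shuffle)
          = (Matrix.fromBlocks J1 0 0 J2).submatrix shuffle shuffle
            - (Matrix.fromBlocks R1 0 0 R2).submatrix shuffle shuffle from
          congrFun (congrFun (Matrix.submatrix_sub _ _) shuffle) shuffle]
        abel
      rw [hsplit, Matrix.add_mulVec, ← Matrix.mulVec_mulVec, ← Matrix.mulVec_mulVec, hBtV]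
      have hcy : (Fskew - Fsym) *ᵥ Sum.elim (y1 t) (y2 t)
          = Sum.elim (u1 t) (u2 t) - Sum.elim (utilde1 t) (utilde2 t) := by
        rw [hcoupling t ht]; abel
      rw [hcy]
      have hJRsub : Matrix.fromBlocks J1 0 0 J2 - Matrix.fromBlocks R1 0 0 R2
          = Matrix.fromBlocks (J1 - R1) 0 0 (J2 - R2) := by
        ext (i|i) (j|j) <;> simp [Matrix.fromBlocks]
      rw [hJRsub, submatrix_shuffle_mulVec, submatrix_id_mulVec, submatrix_id_mulVec]
      have hcomb : ((Matrix.fromBlocks (J1 - R1) 0 0 (J2 - R2)) *ᵥ Sum.elim v1 v2) ∘ shuffle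
            + ((Matrix.fromBlocks B1 0 0 B2) *ᵥ (Sum.elim (u1 t) (u2 t)
              - Sum.elim (utilde1 t) (utilde2 t))) ∘ shuffle
            + ((Matrix.fromBlocks B1 0 0 B2) *ᵥ Sum.elim (utilde1 t) (utilde2 t)) ∘ shuffle
          = ((Matrix.fromBlocks (J1 - R1) 0 0 (J2 - R2)) *ᵥ Sum.elim v1 v2
            + (Matrix.fromBlocks B1 0 0 B2) *ᵥ Sum.elim (u1 t) (u2 t)) ∘ shuffle := by
        funext i
        simp [Matrix.mulVec_sub]
        ring
      rw [hcomb]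
      have hblocks : Matrix.fromBlocks (J1 - R1) 0 0 (J2 - R2) *ᵥ Sum.elim v1 v2
            + Matrix.fromBlocks B1 0 0 B2 *ᵥ Sum.elim (u1 t) (u2 t)
          = Sum.elim (Sum.elim (g11 (w₁ t) (w₂ t)) (Sum.elim (E1 *ᵥ w₂' t) 0))
              (Sum.elim (g21 (x₁ t) (x₂ t)) (Sum.elim (E2 *ᵥ x₂' t) 0)) := by
        rw [Matrix.fromBlocks_mulVec, Matrix.fromBlocks_mulVec]
        simp only [Matrix.zero_mulVec, add_zero, zero_add]
        funext i
        rcases i with i | i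
        · simpa using congrFun (heq1 t ht).symm i
        · simpa using congrFun (heq2 t ht).symm i
      rw [hblocks]
      rw [Matrix.fromBlocks_mulVec]
      simp only [Matrix.zero_mulVec, add_zero, zero_add]
      funext i
      rcases i with (i|i)|((i|i)|(i|i)) <;> rfl
    · rw [hV, hBtV]
end

section
/- Discrete energy dissipation of the implicit midpoint rule: Let H(z₁,z₂) = ½⟨z₁, M₁z₁⟩ + ½⟨z₂, M₂z₂⟩ with M₁, M₂ symmetric, and suppose the discrete iterates satisfy [τ∇_{z₁}H^{k+1/2}; E(z₂^{k+1}-z₂^k); 0] = (J - R)[z₁^{k+1}-z₁^k; τe^{k+1/2}; τz₃^{k+1/2}] + τBu^{k+1/2} and τy^{k+1/2} = Bᵀ[z₁^{k+1}-z₁^k; τe^{k+1/2}; τz₃^{k+1/2}], where e^{k+1/2} = e(z₁^{k+1/2}, z₂^{k+1/2}) satisfies Eᵀe^{k+1/2} = ∇_{z₂}H(z₁^{k+1/2}, z₂^{k+1/2}), x^{k+1/2} := (x^k + x^{k+1})/2, J skew-symmetric, R symmetric positive semi-definite, τ > 0. Then H^{k+1} - H^k ≤ τ⟨y^{k+1/2},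 u^{k+1/2}⟩; in particular H^{k+1} ≤ H^k when u^{k+1/2} = 0. -/
open Matrix

theorem stmt_6 {n₁ n₂ n₃ m : ℕ}
    (M₁ : Matrix (Fin n₁) (Fin n₁) ℝ) (M₂ : Matrix (Fin n₂) (Fin n₂) ℝ)
    (hM₁ : M₁ᵀ = M₁) (hM₂ : M₂ᵀ = M₂)
    (H : (Fin n₁ → ℝ) → (Fin n₂ → ℝ) → ℝ)
    (hH : ∀ x₁ x₂, H x₁ x₂ = (1 / 2) * (x₁ ⬝ᵥ M₁ *ᵥ x₁) + (1 / 2) * (x₂ ⬝ᵥ M₂ *ᵥ x₂))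
    (E : Matrix (Fin n₂) (Fin n₂) ℝ)
    (J R : Matrix (Fin n₁ ⊕ (Fin n₂ ⊕ Fin n₃)) (Fin n₁ ⊕ (Fin n₂ ⊕ Fin n₃)) ℝ)
    (B : Matrix (Fin n₁ ⊕ (Fin n₂ ⊕ Fin n₃)) (Fin m) ℝ)
    (hJ : Jᵀ = -J) (hR : R.PosSemidef)
    (τ : ℝ) (hτ : 0 < τ)
    (z₁k z₁k1 : Fin n₁ → ℝ) (z₂k z₂k1 : Fin n₂ → ℝ) (z₃mid : Fin n₃ → ℝ)
    (emid : Fin n₂ → ℝ) (umid ymid : Fin m → ℝ)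
    -- the effort condition at the midpoint:  Eᵀ e^{k+1/2} = ∇_{z₂}H(z^{k+1/2})
    (hE : Eᵀ *ᵥ emid = M₂ *ᵥ ((1 / 2 : ℝ) • (z₂k + z₂k1)))
    -- the implicit midpoint iteration
    (heq :
      Sum.elim (τ • (M₁ *ᵥ ((1 / 2 : ℝ) • (z₁k + z₁k1))))
        (Sum.elim (E *ᵥ (z₂k1 - z₂k)) 0)
        = (J - R) *ᵥ Sum.elim (z₁k1 - z₁k) (Sum.elim (τ • emid) (τ • z₃mid))
          + τ • (B *ᵥ umid))
    -- the discrete output equation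
    (hy : τ • ymid
        = Bᵀ *ᵥ Sum.elim (z₁k1 - z₁k) (Sum.elim (τ • emid) (τ • z₃mid))) :
    H z₁k1 z₂k1 - H z₁k z₂k ≤ τ * (ymid ⬝ᵥ umid) ∧
    (umid = 0 → H z₁k1 z₂k1 ≤ H z₁k z₂k) := by
  set Δ : Fin n₁ ⊕ (Fin n₂ ⊕ Fin n₃) → ℝ :=
    Sum.elim (z₁k1 - z₁k) (Sum.elim (τ • emid) (τ • z₃mid)) with hΔ
  have hsym1 : ∀ a b : Fin n₁ → ℝ, a ⬝ᵥ M₁ *ᵥ b = b ⬝ᵥ M₁ *ᵥ a := by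
    intro a b
    rw [Matrix.dotProduct_mulVec, ← Matrix.mulVec_transpose, hM₁, dotProduct_comm]
  have hsym2 : ∀ a b : Fin n₂ → ℝ, a ⬝ᵥ M₂ *ᵥ b = b ⬝ᵥ M₂ *ᵥ a := by
    intro a b
    rw [Matrix.dotProduct_mulVec, ← Matrix.mulVec_transpose, hM₂, dotProduct_comm]
  set mid₁ : Fin n₁ → ℝ := (1 / 2 : ℝ) • (z₁k + z₁k1) with hmid₁
  set mid₂ : Fin n₂ → ℝ := (1 / 2 : ℝ) • (z₂k + z₂k1) with hmid₂
  -- energy difference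
  have hdiff : H z₁k1 z₂k1 - H z₁k z₂k
      = (z₁k1 - z₁k) ⬝ᵥ M₁ *ᵥ mid₁ + (z₂k1 - z₂k) ⬝ᵥ M₂ *ᵥ mid₂ := by
    rw [hH, hH, hmid₁, hmid₂]
    have c1 := hsym1 z₁k z₁k1
    have c2 := hsym2 z₂k z₂k1
    simp only [Matrix.mulVec_smul, Matrix.mulVec_add, dotProduct_smul,
      dotProduct_add, sub_dotProduct, smul_eq_mul]
    ring_nf
    linarith
  -- dot the iteration equation with Δ
  have hkey := congrArg (fun v => Δ ⬝ᵥ v) heq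
  rw [hΔ, sumElim_dotProduct_sumElim, sumElim_dotProduct_sumElim] at hkey
  -- left side
  have hL1 : (z₁k1 - z₁k) ⬝ᵥ (τ • (M₁ *ᵥ mid₁)) = τ * ((z₁k1 - z₁k) ⬝ᵥ M₁ *ᵥ mid₁) := by
    simp [dotProduct_smul, smul_eq_mul]
  have hL2 : (τ • emid) ⬝ᵥ (E *ᵥ (z₂k1 - z₂k)) = τ * ((z₂k1 - z₂k) ⬝ᵥ M₂ *ᵥ mid₂) := by
    rw [smul_dotProduct, smul_eq_mul, Matrix.dotProduct_mulVec,
      ← Matrix.mulVec_transpose, hE, dotProduct_comm]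
  have hL3 : (τ • z₃mid) ⬝ᵥ (0 : Fin n₃ → ℝ) = 0 := by simp
  -- right side pieces
  have hJ0 : Δ ⬝ᵥ (J *ᵥ Δ) = 0 := by
    have : Δ ⬝ᵥ (J *ᵥ Δ) = -(Δ ⬝ᵥ (J *ᵥ Δ)) := by
      conv_lhs => rw [Matrix.dotProduct_mulVec, ← Matrix.mulVec_transpose, hJ]
      simp [Matrix.neg_mulVec, dotProduct_comm]
    linarith
  have hR0 : 0 ≤ Δ ⬝ᵥ (R *ᵥ Δ) := hR.dotProduct_mulVec_nonneg Δ
  have hB : Δ ⬝ᵥ (τ • (B *ᵥ umid)) = τ * τ * (ymid ⬝ᵥ umid) := by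
    rw [dotProduct_smul, smul_eq_mul, Matrix.dotProduct_mulVec,
      ← Matrix.mulVec_transpose, ← hy]
    simp [smul_eq_mul, smul_dotProduct]
    ring
  rw [Matrix.sub_mulVec, dotProduct_add, dotProduct_sub, hJ0, hB, hL1, hL2, hL3] at hkey
  have hmain : H z₁k1 z₂k1 - H z₁k z₂k ≤ τ * (ymid ⬝ᵥ umid) := by
    rw [hdiff]
    have h := hkey
    nlinarith [hR0, hτ, mul_pos hτ hτ]
  refine ⟨hmain, fun hu => ?_⟩
  have : ymid ⬝ᵥ umid = 0 := by simp [hu]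
  linarith [hmain, this.symm ▸ hmain]
end

section
/- The dissipation matrix of the foil conductor model, ℛ = [M_σ, -X_foil, 0; -X_foilᵀ, G_foil, 0; 0, 0, 0] with G_foil = X_foilᵀ M_σ⁺ X_foil, is symmetric positive semi-definite, provided M_σ is symmetric positive semi-definite and the column space of X_foil is contained in the column space of M_σ. -/
open Matrix

/-- `P` satisfies the four Moore–Penrose conditions for `M`. -/
def IsMoorePenroseInv {n : ℕ} (M P : Matrix (Fin n) (Fin n) ℝ) : Prop :=
  M * P * M = M ∧ P * M * P = P ∧ (M * P)ᵀ = M * P ∧ (P * M)ᵀ = P * M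

theorem stmt_10 {nw np n₃ : ℕ} (hn₃ : 1 ≤ n₃)
    (Mσ P : Matrix (Fin nw) (Fin nw) ℝ)
    (Xfoil : Matrix (Fin nw) (Fin np) ℝ)
    (hM : Mσ.PosSemidef) (hP : IsMoorePenroseInv Mσ P)
    (hcol : ∀ j, ∃ x : Fin nw → ℝ, Mσ *ᵥ x = fun i => Xfoil i j)
    (Gfoil : Matrix (Fin np) (Fin np) ℝ) (hG : Gfoil = Xfoilᵀ * P * Xfoil) :
    (Matrix.fromBlocks
      (Matrix.fromBlocks Mσ (-Xfoil) (-Xfoilᵀ) Gfoil)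
      (0 : Matrix (Fin nw ⊕ Fin np) (Fin n₃) ℝ)
      (0 : Matrix (Fin n₃) (Fin nw ⊕ Fin np) ℝ)
      (0 : Matrix (Fin n₃) (Fin n₃) ℝ)).PosSemidef := by
  classical
  obtain ⟨hMPM, hPMP, hMPsymm, hPMsymm⟩ := hP
  -- Xfoil = Mσ * Y for some Y
  set Y : Matrix (Fin nw) (Fin np) ℝ := Matrix.of fun i j => (hcol j).choose i with hY
  have hXY : Mσ * Y = Xfoil := by
    ext i j
    have := congrFun ((hcol j).choose_spec) i
    simpa [Matrix.mul_apply, Matrix.mulVec, dotProduct, hY] using this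
  have hMPX : Mσ * (P * Xfoil) = Xfoil := by
    rw [← hXY]
    calc Mσ * (P * (Mσ * Y)) = Mσ * P * Mσ * Y := by simp only [Matrix.mul_assoc]
      _ = Mσ * Y := by rw [hMPM]
  set C : Matrix (Fin nw) (Fin nw ⊕ Fin np) ℝ :=
    Matrix.fromCols 1 (-(P * Xfoil)) with hC
  set B : Matrix (Fin nw) ((Fin nw ⊕ Fin np) ⊕ Fin n₃) ℝ :=
    Matrix.fromCols C 0 with hB
  have hMt : Mσᵀ = Mσ := by simpa [Matrix.IsSymm] using hM.1
  have hXt : Xfoilᵀ * Pᵀ * Mσ = Xfoilᵀ := by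
    calc Xfoilᵀ * Pᵀ * Mσ = (Mσ * (P * Xfoil))ᵀ := by
          rw [Matrix.transpose_mul, Matrix.transpose_mul, hMt]
      _ = Xfoilᵀ := by rw [hMPX]
  have hCblock : Cᴴ * Mσ * C =
      Matrix.fromBlocks Mσ (-Xfoil) (-Xfoilᵀ) Gfoil := by
    have hb11 : (1 : Matrix (Fin nw) (Fin nw) ℝ)ᴴ * Mσ * (1 : Matrix (Fin nw) (Fin nw) ℝ) = Mσ := by simp
    have hb12 : (1 : Matrix (Fin nw) (Fin nw) ℝ)ᴴ * Mσ * -(P * Xfoil) = -Xfoil := by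
      simp [hMPX]
    have hb21 : (-(P * Xfoil))ᴴ * Mσ * (1 : Matrix (Fin nw) (Fin nw) ℝ) = -Xfoilᵀ := by
      calc (-(P * Xfoil))ᴴ * Mσ * (1 : Matrix (Fin nw) (Fin nw) ℝ)
          = -(Xfoilᵀ * Pᵀ * Mσ) := by
            simp [Matrix.conjTranspose_mul, Matrix.mul_assoc]
        _ = -Xfoilᵀ := by rw [hXt]
    have hb22 : (-(P * Xfoil))ᴴ * Mσ * -(P * Xfoil) = Gfoil := by
      calc (-(P * Xfoil))ᴴ * Mσ * -(P * Xfoil)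
          = Xfoilᵀ * Pᵀ * Mσ * (P * Xfoil) := by
            simp [Matrix.conjTranspose_mul, Matrix.mul_assoc]
        _ = Xfoilᵀ * (P * Xfoil) := by rw [hXt]
        _ = Gfoil := by rw [hG, Matrix.mul_assoc]
    rw [hC, Matrix.conjTranspose_fromCols_eq_fromRows_conjTranspose,
      Matrix.fromRows_mul, Matrix.fromRows_mul_fromCols,
      hb11, hb12, hb21, hb22]
  have key : Bᴴ * Mσ * B =
      (Matrix.fromBlocks
        (Matrix.fromBlocks Mσ (-Xfoil) (-Xfoilᵀ) Gfoil)
        (0 : Matrix (Fin nw ⊕ Fin np) (Fin n₃) ℝ)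
        (0 : Matrix (Fin n₃) (Fin nw ⊕ Fin np) ℝ)
        (0 : Matrix (Fin n₃) (Fin n₃) ℝ)) := by
    rw [hB, Matrix.conjTranspose_fromCols_eq_fromRows_conjTranspose,
      Matrix.fromRows_mul, Matrix.fromRows_mul_fromCols, hCblock]
    congr 1 <;> simp
  have := hM.conjTranspose_mul_mul_same B
  rwa [key] at this
end

section
/- Power balance of the solid conductor model: if M_σ is symmetric positive semi-definite and (a, v_sol) solves M_σȧ + K_νa - M_σX_sol v_sol = 0 and -X_solᵀM_σᵀȧ + G_sol v_sol - ı_sol = 0 with G_sol = X_solᵀ M_σ X_sol, then for H(a) = ½aᵀK_νa one has d/dt H(a) = -(ȧ - X_sol v_sol)ᵀ M_σ (ȧ - X_sol v_sol) + ı_solᵀ v_sol ≤ ı_solᵀ v_sol. -/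
open Matrix

theorem stmt_12 {nw nsol : ℕ}
    (Kν Mσ : Matrix (Fin nw) (Fin nw) ℝ)
    (Xsol : Matrix (Fin nw) (Fin nsol) ℝ)
    (hK : Kνᵀ = Kν) (hM : Mσ.PosSemidef)
    (Gsol : Matrix (Fin nsol) (Fin nsol) ℝ) (hG : Gsol = Xsolᵀ * Mσ * Xsol)
    (t₀ tf : ℝ)
    (a a' : ℝ → Fin nw → ℝ) (vsol icursol : ℝ → Fin nsol → ℝ)
    (ha : ∀ t ∈ Set.Icc t₀ tf, ∀ i, HasDerivAt (fun s => a s i) (a' t i) t)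
    (heq1 : ∀ t ∈ Set.Icc t₀ tf,
      Mσ *ᵥ a' t + Kν *ᵥ a t - (Mσ * Xsol) *ᵥ vsol t = 0)
    (heq2 : ∀ t ∈ Set.Icc t₀ tf,
      -((Xsolᵀ * Mσᵀ) *ᵥ a' t) + Gsol *ᵥ vsol t - icursol t = 0) :
    ∀ t ∈ Set.Icc t₀ tf,
      HasDerivAt (fun s => (1 / 2) * (a s ⬝ᵥ Kν *ᵥ a s))
        (-((a' t - Xsol *ᵥ vsol t) ⬝ᵥ Mσ *ᵥ (a' t - Xsol *ᵥ vsol t))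
          + icursol t ⬝ᵥ vsol t) t ∧
      -((a' t - Xsol *ᵥ vsol t) ⬝ᵥ Mσ *ᵥ (a' t - Xsol *ᵥ vsol t)) + icursol t ⬝ᵥ vsol t
        ≤ icursol t ⬝ᵥ vsol t := by
  have hMt : Mσᵀ = Mσ := (show Mσ.IsSymm by simpa using hM.1).eq
  have key : ∀ (A : Matrix (Fin nw) (Fin nw) ℝ), Aᵀ = A →
      ∀ x y : Fin nw → ℝ, x ⬝ᵥ A *ᵥ y = y ⬝ᵥ A *ᵥ x := by
    intro A hA x y
    nth_rewrite 1 [← hA]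
    rw [dotProduct_mulVec, vecMul_transpose, dotProduct_comm]
  intro t ht
  set x := a' t with hx
  set y := Xsol *ᵥ vsol t with hy
  have e1 : Mσ *ᵥ x + Kν *ᵥ a t - Mσ *ᵥ y = 0 := by
    have h := heq1 t ht
    rwa [← mulVec_mulVec] at h
  have hKa : Kν *ᵥ a t = Mσ *ᵥ y - Mσ *ᵥ x := by
    have h := sub_eq_zero.mp e1
    rw [← h]; abel
  have hi : icursol t = Gsol *ᵥ vsol t - (Xsolᵀ * Mσᵀ) *ᵥ x := by
    have h := sub_eq_zero.mp (heq2 t ht)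
    rw [← h]; abel
  have hd : x ⬝ᵥ Kν *ᵥ a t = x ⬝ᵥ Mσ *ᵥ y - x ⬝ᵥ Mσ *ᵥ x := by
    rw [hKa, dotProduct_sub]
  have hGv : (Gsol *ᵥ vsol t) ⬝ᵥ vsol t = y ⬝ᵥ Mσ *ᵥ y := by
    rw [hG, dotProduct_comm]
    simp only [← mulVec_mulVec]
    rw [dotProduct_mulVec (vsol t) Xsolᵀ, vecMul_transpose, ← hy]
  have hXv : ((Xsolᵀ * Mσᵀ) *ᵥ x) ⬝ᵥ vsol t = x ⬝ᵥ Mσ *ᵥ y := by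
    rw [dotProduct_comm]
    simp only [← mulVec_mulVec]
    rw [dotProduct_mulVec (vsol t) Xsolᵀ, vecMul_transpose, ← hy, hMt,
      key Mσ hMt]
  have hiv : icursol t ⬝ᵥ vsol t = y ⬝ᵥ Mσ *ᵥ y - x ⬝ᵥ Mσ *ᵥ y := by
    rw [hi, sub_dotProduct, hGv, hXv]
  -- derivative of quadratic form
  have hder : HasDerivAt (fun s => a s ⬝ᵥ Kν *ᵥ a s)
      (x ⬝ᵥ Kν *ᵥ a t + a t ⬝ᵥ Kν *ᵥ x) t := by
    have h : HasDerivAt (fun s => ∑ i, a s i * ∑ j, Kν i j * a s j)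
        (∑ i, (x i * ∑ j, Kν i j * a t j + a t i * ∑ j, Kν i j * x j)) t :=
      HasDerivAt.fun_sum fun i _ =>
        ((ha t ht i).mul (HasDerivAt.fun_sum fun j _ => (ha t ht j).const_mul _))
    simpa [dotProduct, mulVec, Finset.sum_add_distrib] using h
  have hquad : (x - y) ⬝ᵥ Mσ *ᵥ (x - y)
      = x ⬝ᵥ Mσ *ᵥ x - x ⬝ᵥ Mσ *ᵥ y - x ⬝ᵥ Mσ *ᵥ y + y ⬝ᵥ Mσ *ᵥ y := by
    rw [mulVec_sub, sub_dotProduct, dotProduct_sub, dotProduct_sub,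
      key Mσ hMt y x]
    ring
  have hval : -((x - y) ⬝ᵥ Mσ *ᵥ (x - y)) + icursol t ⬝ᵥ vsol t
      = 1 / 2 * (x ⬝ᵥ Kν *ᵥ a t + a t ⬝ᵥ Kν *ᵥ x) := by
    rw [key Kν hK (a t) x, hquad, hiv]
    linarith [hd]
  have hnonneg : 0 ≤ (x - y) ⬝ᵥ Mσ *ᵥ (x - y) := by
    have := hM.dotProduct_mulVec_nonneg (x - y)
    simpa using this
  refine ⟨?_, by linarith⟩
  rw [hval]
  exact hder.const_mul (1 / 2 : ℝ)
end

section
/- The MNA system fits the generalized energy-based structure: with z₂ = (φ, ȷ_L), z₃ = ȷ_V, E = diag(A_C C A_Cᵀ, L), effort e(z₂) = z₂, Hamiltonian H(z₂) = ½φᵀA_C C A_Cᵀφ + ½ȷ_LᵀLȷ_L, J = [0, -A_L, -A_V; A_Lᵀ, 0, 0; A_Vᵀ, 0, 0], R = diag(A_R G A_Rᵀ, 0, 0), and B = -[A_I, 0; 0, 0; 0, I], the identities Eᵀe(z₂) = ∇_{z₂}H(z₂), Jᵀ = -J, R = Rᵀ ≥ 0 hold, and the MNA equations A_C C A_Cᵀ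 φ̇ + A_R G A_Rᵀ φ + A_L ȷ_L + A_V ȷ_V + A_I ı = 0, L ȷ̇_L - A_Lᵀ φ = 0, A_Vᵀφ - v = 0 are equivalent to [∇_{z₁}H; Eż₂; 0] = (J-R)[·; e(z₂); z₃] + Bu with u = (ı, v) (and empty z₁). -/
open Matrix

lemma psd_pad {m n : Type*} [Fintype m] [Fintype n]
    {M : Matrix m m ℝ} (hM : M.PosSemidef) :
    (Matrix.fromBlocks M 0 0 (0 : Matrix n n ℝ)).PosSemidef := by
  refine Matrix.PosSemidef.of_dotProduct_mulVec_nonneg ?_ ?_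
  · have h1 : Mᴴ = M := hM.1
    have h2 : Mᵀ = M := by
      rw [← Matrix.conjTranspose_eq_transpose_of_trivial]; exact h1
    show (Matrix.fromBlocks M 0 0 (0:Matrix n n ℝ))ᴴ = _
    rw [Matrix.conjTranspose_eq_transpose_of_trivial, Matrix.fromBlocks_transpose, h2]
    simp
  · intro x
    have h := hM.dotProduct_mulVec_nonneg (x ∘ Sum.inl)
    simpa [Matrix.fromBlocks_mulVec, dotProduct, Fintype.sum_sum_type,
      Function.comp] using h

lemma sym_conj {m n : Type*} [Fintype m] [Fintype n]
    {C : Matrix n n ℝ} (hC : Cᴴ = C) (A : Matrix m n ℝ) :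
    (A * C * Aᵀ)ᵀ = A * C * Aᵀ := by
  have h2 : Cᵀ = C := by rw [← Matrix.conjTranspose_eq_transpose_of_trivial]; exact hC
  rw [Matrix.transpose_mul, Matrix.transpose_mul, Matrix.transpose_transpose, h2,
    Matrix.mul_assoc]

lemma elim_eq {α β γ : Type*} {a c : α → γ} {b d : β → γ} :
    Sum.elim a b = Sum.elim c d ↔ a = c ∧ b = d := by
  constructor
  · intro h
    exact ⟨funext fun i => congrFun h (.inl i), funext fun i => congrFun h (.inr i)⟩
  · rintro ⟨rfl, rfl⟩; rfl

theorem stmt_13 {nφ bC bR bL bV bI : ℕ}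
    (AC : Matrix (Fin nφ) (Fin bC) ℝ) (AR : Matrix (Fin nφ) (Fin bR) ℝ)
    (AL : Matrix (Fin nφ) (Fin bL) ℝ) (AV : Matrix (Fin nφ) (Fin bV) ℝ)
    (AI : Matrix (Fin nφ) (Fin bI) ℝ)
    (C : Matrix (Fin bC) (Fin bC) ℝ) (G : Matrix (Fin bR) (Fin bR) ℝ)
    (L : Matrix (Fin bL) (Fin bL) ℝ)
    (hC : C.PosDef) (hG : G.PosDef) (hL : L.PosDef)
    -- the energy-based structure matrices of the MNA model
    (E : Matrix (Fin nφ ⊕ Fin bL) (Fin nφ ⊕ Fin bL) ℝ)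
    (hE : E = Matrix.fromBlocks (AC * C * ACᵀ) 0 0 L)
    (J R : Matrix ((Fin nφ ⊕ Fin bL) ⊕ Fin bV) ((Fin nφ ⊕ Fin bL) ⊕ Fin bV) ℝ)
    (hJ : J = Matrix.fromBlocks
      (Matrix.fromBlocks 0 (-AL) ALᵀ 0) (Matrix.fromRows (-AV) 0)
      (Matrix.fromCols AVᵀ 0) 0)
    (hR : R = Matrix.fromBlocks
      (Matrix.fromBlocks (AR * G * ARᵀ) 0 0 0) 0 0 0)
    (B : Matrix ((Fin nφ ⊕ Fin bL) ⊕ Fin bV) (Fin bI ⊕ Fin bV) ℝ)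
    (hB : B = -(Matrix.fromBlocks (Matrix.fromRows AI 0) 0 0 1)) :
    -- the effort condition  Eᵀ e(z₂) = ∇_{z₂}H(z₂)  with  e(z₂) = z₂
    (∀ (φ : Fin nφ → ℝ) (jL : Fin bL → ℝ),
      Eᵀ *ᵥ Sum.elim φ jL = Sum.elim ((AC * C * ACᵀ) *ᵥ φ) (L *ᵥ jL)) ∧
    -- structure properties
    Jᵀ = -J ∧ R.PosSemidef ∧
    -- equivalence of the MNA equations with the energy-based form (empty z₁)
    (∀ (φ φ' : Fin nφ → ℝ) (jL jL' : Fin bL → ℝ) (jV : Fin bV → ℝ)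
        (icur : Fin bI → ℝ) (v : Fin bV → ℝ),
      ((AC * C * ACᵀ) *ᵥ φ' + (AR * G * ARᵀ) *ᵥ φ + AL *ᵥ jL
          + AV *ᵥ jV + AI *ᵥ icur = 0 ∧
        L *ᵥ jL' - ALᵀ *ᵥ φ = 0 ∧
        AVᵀ *ᵥ φ - v = 0)
      ↔
      Sum.elim (E *ᵥ Sum.elim φ' jL') 0
        = (J - R) *ᵥ Sum.elim (Sum.elim φ jL) jV + B *ᵥ Sum.elim icur v) := by
  have hCsym : (AC * C * ACᵀ)ᵀ = AC * C * ACᵀ := sym_conj hC.1 AC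
  have hLsym : Lᵀ = L := by
    rw [← Matrix.conjTranspose_eq_transpose_of_trivial]; exact hL.1
  refine ⟨?_, ?_, ?_, ?_⟩
  · intro φ jL
    rw [hE, Matrix.fromBlocks_transpose, hCsym, hLsym]
    funext x
    rcases x with i | i <;>
      simp [Matrix.fromBlocks_mulVec]
  · rw [hJ]
    funext x y
    rcases x with (i | i) | i <;> rcases y with (j | j) | j <;>
      simp [Matrix.fromBlocks_transpose, Matrix.transpose_fromRows,
        Matrix.transpose_fromCols]
  · rw [hR]
    have hP : (AR * G * ARᵀ).PosSemidef := by
      have := hG.posSemidef.mul_mul_conjTranspose_same AR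
      rwa [Matrix.conjTranspose_eq_transpose_of_trivial] at this
    exact psd_pad (psd_pad hP)
  · intro φ φ' jL jL' jV icur v
    have hRHS : (J - R) *ᵥ Sum.elim (Sum.elim φ jL) jV + B *ᵥ Sum.elim icur v
        = Sum.elim
            (Sum.elim
              (-((AR * G * ARᵀ) *ᵥ φ + AL *ᵥ jL + AV *ᵥ jV + AI *ᵥ icur))
              (ALᵀ *ᵥ φ))
            (AVᵀ *ᵥ φ - v) := by
      rw [hJ, hR, hB]
      funext x
      rcases x with (i | i) | i <;>
        simp [Matrix.sub_mulVec, Matrix.fromBlocks_mulVec, Matrix.neg_mulVec,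
          Matrix.fromRows_mulVec, Matrix.fromCols_mulVec_sumElim, Matrix.add_mulVec, Pi.sub_apply] <;>
        ring
    have hLHS : Sum.elim (E *ᵥ Sum.elim φ' jL') (0 : Fin bV → ℝ)
        = Sum.elim (Sum.elim ((AC * C * ACᵀ) *ᵥ φ') (L *ᵥ jL')) 0 := by
      rw [hE]
      funext x
      rcases x with (i | i) | i <;> simp [Matrix.fromBlocks_mulVec]
    rw [hRHS, hLHS, elim_eq, elim_eq]
    constructor
    · rintro ⟨h1, h2, h3⟩
      refine ⟨⟨?_, ?_⟩, ?_⟩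
      · rw [eq_neg_iff_add_eq_zero, ← h1]; abel
      · rw [← sub_eq_zero]; rw [sub_eq_zero] at h2; rw [h2]; abel
      · exact h3.symm
    · rintro ⟨⟨h1, h2⟩, h3⟩
      refine ⟨?_, ?_, ?_⟩
      · rw [eq_neg_iff_add_eq_zero] at h1; rw [← h1]; abel
      · rw [h2]; abel
      · exact h3.symm
end

section
/- Energy dissipation of the linear MNA model: if φ, ȷ_L, ȷ_V satisfy A_C C A_Cᵀ φ̇ + A_R G A_Rᵀ φ + A_L ȷ_L + A_V ȷ_V + A_I ı = 0, L ȷ̇_L - A_Lᵀ φ = 0, and A_Vᵀ φ = v, with C, G, L symmetric positive semi-definite, then for H = ½φᵀA_C C A_Cᵀφ + ½ȷ_LᵀLȷ_L one has d/dt H = -φᵀ A_R G A_Rᵀ φ - φᵀ A_I ı - ȷ_Vᵀ v ≤ -⟨A_Iᵀφ, ı⟩ - ⟨v, ȷ_V⟩. -/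
open Matrix

lemma quad_deriv {n m : ℕ} (M : Matrix (Fin n) (Fin m) ℝ)
    (f f' : ℝ → Fin n → ℝ) (g g' : ℝ → Fin m → ℝ) (t : ℝ)
    (hf : ∀ i, HasDerivAt (fun s => f s i) (f' t i) t)
    (hg : ∀ j, HasDerivAt (fun s => g s j) (g' t j) t) :
    HasDerivAt (fun s => f s ⬝ᵥ M *ᵥ g s)
      (f' t ⬝ᵥ M *ᵥ g t + f t ⬝ᵥ M *ᵥ g' t) t := by
  have hrw : ∀ s, f s ⬝ᵥ M *ᵥ g s = ∑ i, ∑ j, f s i * (M i j * g s j) := by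
    intro s; simp [dotProduct, mulVec, Finset.mul_sum]
  simp only [hrw]
  have h : HasDerivAt (fun s => ∑ i, ∑ j, f s i * (M i j * g s j))
      (∑ i, ∑ j, (f' t i * (M i j * g t j) + f t i * (M i j * g' t j))) t := by
    apply HasDerivAt.fun_sum; intro i _
    apply HasDerivAt.fun_sum; intro j _
    exact (hf i).mul ((hg j).const_mul (M i j))
  convert h using 1
  simp [dotProduct, mulVec, Finset.mul_sum, Finset.sum_add_distrib]

lemma dot_sym {n : ℕ} {M : Matrix (Fin n) (Fin n) ℝ} (hM : Mᵀ = M)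
    (x y : Fin n → ℝ) : x ⬝ᵥ M *ᵥ y = y ⬝ᵥ M *ᵥ x := by
  rw [dotProduct_mulVec, ← mulVec_transpose, hM, dotProduct_comm]

lemma dot_move {n m : ℕ} (A : Matrix (Fin n) (Fin m) ℝ)
    (x : Fin n → ℝ) (y : Fin m → ℝ) : x ⬝ᵥ A *ᵥ y = (Aᵀ *ᵥ x) ⬝ᵥ y := by
  rw [dotProduct_mulVec, ← mulVec_transpose]

theorem stmt_14 {nφ bC bR bL bV bI : ℕ}
    (AC : Matrix (Fin nφ) (Fin bC) ℝ) (AR : Matrix (Fin nφ) (Fin bR) ℝ)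
    (AL : Matrix (Fin nφ) (Fin bL) ℝ) (AV : Matrix (Fin nφ) (Fin bV) ℝ)
    (AI : Matrix (Fin nφ) (Fin bI) ℝ)
    (C : Matrix (Fin bC) (Fin bC) ℝ) (G : Matrix (Fin bR) (Fin bR) ℝ)
    (L : Matrix (Fin bL) (Fin bL) ℝ)
    (hC : C.PosSemidef) (hG : G.PosSemidef) (hL : L.PosSemidef)
    (t₀ tf : ℝ)
    (φ φ' : ℝ → Fin nφ → ℝ) (jL jL' : ℝ → Fin bL → ℝ) (jV : ℝ → Fin bV → ℝ)
    (icur : ℝ → Fin bI → ℝ) (v : ℝ → Fin bV → ℝ)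
    (hφ : ∀ t ∈ Set.Icc t₀ tf, ∀ i, HasDerivAt (fun s => φ s i) (φ' t i) t)
    (hjL : ∀ t ∈ Set.Icc t₀ tf, ∀ i, HasDerivAt (fun s => jL s i) (jL' t i) t)
    (heq1 : ∀ t ∈ Set.Icc t₀ tf,
      (AC * C * ACᵀ) *ᵥ φ' t + (AR * G * ARᵀ) *ᵥ φ t + AL *ᵥ jL t
        + AV *ᵥ jV t + AI *ᵥ icur t = 0)
    (heq2 : ∀ t ∈ Set.Icc t₀ tf, L *ᵥ jL' t - ALᵀ *ᵥ φ t = 0)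
    (heq3 : ∀ t ∈ Set.Icc t₀ tf, AVᵀ *ᵥ φ t = v t) :
    ∀ t ∈ Set.Icc t₀ tf,
      HasDerivAt
        (fun s => (1 / 2) * (φ s ⬝ᵥ (AC * C * ACᵀ) *ᵥ φ s)
          + (1 / 2) * (jL s ⬝ᵥ L *ᵥ jL s))
        (-(φ t ⬝ᵥ (AR * G * ARᵀ) *ᵥ φ t) - φ t ⬝ᵥ AI *ᵥ icur t - jV t ⬝ᵥ v t) t ∧
      -(φ t ⬝ᵥ (AR * G * ARᵀ) *ᵥ φ t) - φ t ⬝ᵥ AI *ᵥ icur t - jV t ⬝ᵥ v t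
        ≤ -((AIᵀ *ᵥ φ t) ⬝ᵥ icur t) - v t ⬝ᵥ jV t := by
  intro t ht
  have hCsym : Cᵀ = C := hC.1.eq
  have hLsym : Lᵀ = L := hL.1.eq
  have hMsym : (AC * C * ACᵀ)ᵀ = AC * C * ACᵀ := by
    simp [Matrix.transpose_mul, hCsym, Matrix.mul_assoc]
  -- derivative of H
  have h1 := quad_deriv (AC * C * ACᵀ) φ φ' φ φ' t (hφ t ht) (hφ t ht)
  have h2 := quad_deriv L jL jL' jL jL' t (hjL t ht) (hjL t ht)
  have hD := ((h1.const_mul (1/2 : ℝ)).add (h2.const_mul (1/2 : ℝ)))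
  -- compute the value of the derivative
  have e1 : (AC * C * ACᵀ) *ᵥ φ' t
      = -((AR * G * ARᵀ) *ᵥ φ t + AL *ᵥ jL t + AV *ᵥ jV t + AI *ᵥ icur t) := by
    have := heq1 t ht
    funext i
    have := congrFun this i
    simp only [Pi.add_apply, Pi.zero_apply, Pi.neg_apply] at this ⊢
    linarith
  have e2 : L *ᵥ jL' t = ALᵀ *ᵥ φ t := by
    have := heq2 t ht; funext i
    have := congrFun this i
    simp only [Pi.sub_apply, Pi.zero_apply] at this; linarith
  have key : (1/2 : ℝ) * (φ' t ⬝ᵥ (AC * C * ACᵀ) *ᵥ φ t + φ t ⬝ᵥ (AC * C * ACᵀ) *ᵥ φ' t)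
      + (1/2 : ℝ) * (jL' t ⬝ᵥ L *ᵥ jL t + jL t ⬝ᵥ L *ᵥ jL' t)
      = -(φ t ⬝ᵥ (AR * G * ARᵀ) *ᵥ φ t) - φ t ⬝ᵥ AI *ᵥ icur t - jV t ⬝ᵥ v t := by
    rw [dot_sym hMsym (φ' t) (φ t), dot_sym hLsym (jL' t) (jL t)]
    rw [e1, e2]
    have hAL : φ t ⬝ᵥ AL *ᵥ jL t = jL t ⬝ᵥ ALᵀ *ᵥ φ t := by
      rw [dot_move, dotProduct_comm]
    have hAV : φ t ⬝ᵥ AV *ᵥ jV t = jV t ⬝ᵥ v t := by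
      rw [dot_move, ← heq3 t ht, dotProduct_comm]
    simp only [dotProduct_neg, dotProduct_add]
    rw [hAL] at *
    rw [hAV]
    ring
  constructor
  · rw [← key]; exact hD
  · have hpsd : (AR * G * ARᵀ).PosSemidef := by
      have := hG.mul_mul_conjTranspose_same AR
      simpa using this
    have h0 : 0 ≤ φ t ⬝ᵥ (AR * G * ARᵀ) *ᵥ φ t := by
      have := hpsd.dotProduct_mulVec_nonneg (φ t); simpa using this
    have hAI : φ t ⬝ᵥ AI *ᵥ icur t = (AIᵀ *ᵥ φ t) ⬝ᵥ icur t := dot_move AI _ _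
    have hV : jV t ⬝ᵥ v t = v t ⬝ᵥ jV t := dotProduct_comm _ _
    rw [hAI, hV]
    linarith
end
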